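/- Let (O_i)_{i=1}^n be a partition of a finite set X, μ a probability mass function on X with p_i := ∑_{x∈O_i} μ(x) > 0 for all i, and let (q_i) be strictly positive reals summing to 1. For each i let μ_i be the conditional distribution of μ on O_i, and let σ_i be probability mass functions supported in O_i that are absolutely continuous with respect to μ_i; set σ = ∑_i q_i σ_i. Then the squared Hellinger distance D₂(σ‖μ) is minimal over all such choices (σ_i) if and only if σ_i = μ_i for all i. -/

import Mathlib

open Finset

noncomputable def D2 {X : Type*} [Fintype X] (a b : X → ℝ) : ℝ :=
  1 - ∑ x, Real.sqrt (a x * b x)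

lemma sqrt_mul_le_half_add {a b : ℝ} (ha : 0 ≤ a) (hb : 0 ≤ b) :
    Real.sqrt (a * b) ≤ (a + b) / 2 := by
  rw [Real.sqrt_mul ha]
  nlinarith [sq_nonneg (Real.sqrt a - Real.sqrt b), Real.sq_sqrt ha, Real.sq_sqrt hb,
    Real.sqrt_nonneg a, Real.sqrt_nonneg b]

lemma eq_of_sqrt_mul_eq_half_add {a b : ℝ} (ha : 0 ≤ a) (hb : 0 ≤ b)
    (h : Real.sqrt (a * b) = (a + b) / 2) : a = b := by
  have h2 : (Real.sqrt (a * b)) ^ 2 = a * b := Real.sq_sqrt (mul_nonneg ha hb)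
  rw [h] at h2
  nlinarith [sq_nonneg (a - b)]

theorem hellinger_min_iff {X : Type*} [Fintype X] [DecidableEq X] {n : ℕ}
    (O : Fin n → Finset X)
    (hcover : ∀ x : X, ∃ i, x ∈ O i)
    (hdisj : ∀ i j, i ≠ j → Disjoint (O i) (O j))
    (hOne : ∀ i, (O i).Nonempty)
    (μ : X → ℝ) (hμ0 : ∀ x, 0 ≤ μ x) (hμ1 : ∑ x, μ x = 1)
    (p : Fin n → ℝ) (hp : ∀ i, p i = ∑ x ∈ O i, μ x) (hppos : ∀ i, 0 < p i)
    (q : Fin n → ℝ) (hq : ∀ i, 0 < q i) (hq1 : ∑ i, q i = 1)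
    (μc : Fin n → X → ℝ)
    (hμc : ∀ i x, μc i x = if x ∈ O i then μ x / p i else 0)
    (σc : Fin n → X → ℝ)
    (hσ0 : ∀ i x, 0 ≤ σc i x) (hσ1 : ∀ i, ∑ x, σc i x = 1)
    (hσsupp : ∀ i, ∀ x ∉ O i, σc i x = 0)
    (hσac : ∀ i x, μ x = 0 → σc i x = 0) :
    (∀ τ : Fin n → X → ℝ,
        (∀ i x, 0 ≤ τ i x) → (∀ i, ∑ x, τ i x = 1) →
        (∀ i, ∀ x ∉ O i, τ i x = 0) → (∀ i x, μ x = 0 → τ i x = 0) →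
        D2 (fun x => ∑ i, q i * σc i x) μ ≤ D2 (fun x => ∑ i, q i * τ i x) μ)
      ↔ (∀ i, σc i = μc i) := by
  -- partition sum decomposition
  have hunion : (Finset.univ : Finset X) = Finset.univ.biUnion O := by
    ext x; simpa using hcover x
  have hsum : ∀ f : X → ℝ, ∑ x, f x = ∑ i, ∑ x ∈ O i, f x := by
    intro f
    rw [hunion, Finset.sum_biUnion]
    intro i _ j _ hij
    exact hdisj i j hij
  -- μ sums to p i on O i
  have hpμ : ∀ i, ∑ x ∈ O i, μ x = p i := fun i => (hp i).symm
  have hqppos : ∀ i, 0 < q i * p i := fun i => mul_pos (hq i) (hppos i)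
  -- sqrt value identity: √(q i * p i) = √(q i / p i) * p i
  have hval_sqrt : ∀ i, Real.sqrt (q i * p i) = Real.sqrt (q i / p i) * p i := by
    intro i
    have hpne : p i ≠ 0 := (hppos i).ne'
    rw [show q i * p i = (q i / p i) * p i ^ 2 by field_simp,
      Real.sqrt_mul (div_nonneg (hq i).le (hppos i).le), Real.sqrt_sq (hppos i).le]
  -- key bound
  have key : ∀ τ : Fin n → X → ℝ, (∀ i x, 0 ≤ τ i x) → (∀ i, ∑ x, τ i x = 1) →
      (∀ i, ∀ x ∉ O i, τ i x = 0) →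
      (∑ x, Real.sqrt ((∑ i, q i * τ i x) * μ x) ≤ ∑ i, Real.sqrt (q i * p i)) ∧
      ((∑ x, Real.sqrt ((∑ i, q i * τ i x) * μ x) = ∑ i, Real.sqrt (q i * p i)) →
        ∀ i, τ i = μc i) := by
    intro τ hτ0 hτ1 hτsupp
    -- mixture collapses on O i
    have hmix : ∀ i, ∀ x ∈ O i, (∑ j, q j * τ j x) = q i * τ i x := by
      intro i x hx
      refine Finset.sum_eq_single i ?_ (by simp)
      intro j _ hji
      have hxj : x ∉ O j := fun hxj => (Finset.disjoint_left.mp (hdisj j i hji) hxj hx).elim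
      rw [hτsupp j x hxj, mul_zero]
    -- per-point rewrite
    have hpt : ∀ i, ∀ x ∈ O i, Real.sqrt ((∑ j, q j * τ j x) * μ x)
        = Real.sqrt (q i * p i) * Real.sqrt (τ i x * (μ x / p i)) := by
      intro i x hx
      rw [hmix i x hx, ← Real.sqrt_mul (hqppos i).le]
      congr 1
      have hpne : p i ≠ 0 := (hppos i).ne'
      field_simp
    -- sums over O i
    have hτO : ∀ i, ∑ x ∈ O i, τ i x = 1 := by
      intro i
      rw [Finset.sum_subset (Finset.subset_univ _) (fun x _ hx => hτsupp i x hx)]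
      exact hτ1 i
    have hblocksum : ∀ i, ∑ x ∈ O i, (τ i x + μ x / p i) / 2 = 1 := by
      intro i
      have hpne : p i ≠ 0 := (hppos i).ne'
      rw [← Finset.sum_div, Finset.sum_add_distrib, hτO i, ← Finset.sum_div, hpμ i]
      field_simp
      norm_num
    -- pointwise inequality inside block
    have hptle : ∀ i, ∀ x ∈ O i,
        Real.sqrt (τ i x * (μ x / p i)) ≤ (τ i x + μ x / p i) / 2 := by
      intro i x _
      exact sqrt_mul_le_half_add (hτ0 i x) (div_nonneg (hμ0 x) (hppos i).le)
    -- block bound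
    have hblock : ∀ i, ∑ x ∈ O i, Real.sqrt ((∑ j, q j * τ j x) * μ x)
        ≤ Real.sqrt (q i * p i) := by
      intro i
      calc ∑ x ∈ O i, Real.sqrt ((∑ j, q j * τ j x) * μ x)
          = ∑ x ∈ O i, Real.sqrt (q i * p i) * Real.sqrt (τ i x * (μ x / p i)) :=
            Finset.sum_congr rfl (hpt i)
        _ = Real.sqrt (q i * p i) * ∑ x ∈ O i, Real.sqrt (τ i x * (μ x / p i)) := by
            rw [Finset.mul_sum]
        _ ≤ Real.sqrt (q i * p i) * ∑ x ∈ O i, (τ i x + μ x / p i) / 2 := by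
            apply mul_le_mul_of_nonneg_left _ (Real.sqrt_nonneg _)
            exact Finset.sum_le_sum (hptle i)
        _ = Real.sqrt (q i * p i) := by rw [hblocksum i, mul_one]
    constructor
    · rw [hsum]
      exact Finset.sum_le_sum (fun i _ => hblock i)
    · intro heq i
      rw [hsum] at heq
      have hbe : ∀ i ∈ Finset.univ, ∑ x ∈ O i, Real.sqrt ((∑ j, q j * τ j x) * μ x)
          = Real.sqrt (q i * p i) :=
        ((Finset.sum_eq_sum_iff_of_le (fun i _ => hblock i)).mp heq)
      have hbei := hbe i (Finset.mem_univ i)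
      -- deduce inner sum equality
      have hsqrtpos : 0 < Real.sqrt (q i * p i) := Real.sqrt_pos.mpr (hqppos i)
      have hinner : ∑ x ∈ O i, Real.sqrt (τ i x * (μ x / p i))
          = ∑ x ∈ O i, (τ i x + μ x / p i) / 2 := by
        have h1 : Real.sqrt (q i * p i) * ∑ x ∈ O i, Real.sqrt (τ i x * (μ x / p i))
            = Real.sqrt (q i * p i) * 1 := by
          rw [mul_one, Finset.mul_sum]
          calc ∑ x ∈ O i, Real.sqrt (q i * p i) * Real.sqrt (τ i x * (μ x / p i))
              = ∑ x ∈ O i, Real.sqrt ((∑ j, q j * τ j x) * μ x) :=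
                (Finset.sum_congr rfl (hpt i)).symm
            _ = Real.sqrt (q i * p i) := hbei
        have h2 := mul_left_cancel₀ hsqrtpos.ne' h1
        rw [h2, hblocksum i]
      have hpteq : ∀ x ∈ O i,
          Real.sqrt (τ i x * (μ x / p i)) = (τ i x + μ x / p i) / 2 :=
        (Finset.sum_eq_sum_iff_of_le (hptle i)).mp hinner
      funext x
      by_cases hx : x ∈ O i
      · have := eq_of_sqrt_mul_eq_half_add (hτ0 i x) (div_nonneg (hμ0 x) (hppos i).le) (hpteq x hx)
        rw [hμc, if_pos hx, this]
      · rw [hτsupp i x hx, hμc, if_neg hx]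
  -- μc satisfies the constraints
  have hμc0 : ∀ i x, 0 ≤ μc i x := by
    intro i x; rw [hμc]; split
    · exact div_nonneg (hμ0 x) (hppos i).le
    · exact le_rfl
  have hμc1 : ∀ i, ∑ x, μc i x = 1 := by
    intro i
    have hpne : p i ≠ 0 := (hppos i).ne'
    simp only [hμc]
    rw [Finset.sum_ite_mem, Finset.univ_inter, ← Finset.sum_div, hpμ i]
    field_simp
  have hμcsupp : ∀ i, ∀ x ∉ O i, μc i x = 0 := by
    intro i x hx; rw [hμc, if_neg hx]
  have hμcac : ∀ i x, μ x = 0 → μc i x = 0 := by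
    intro i x hx; rw [hμc, hx]; split <;> simp
  -- value at μc is exactly the bound
  have hval : ∑ x, Real.sqrt ((∑ i, q i * μc i x) * μ x) = ∑ i, Real.sqrt (q i * p i) := by
    rw [hsum]
    refine Finset.sum_congr rfl (fun i _ => ?_)
    have hpne : p i ≠ 0 := (hppos i).ne'
    have hmix : ∀ x ∈ O i, (∑ j, q j * μc j x) = q i * (μ x / p i) := by
      intro x hx
      rw [Finset.sum_eq_single i (fun j _ hji => by
        have hxj : x ∉ O j := fun hxj => (Finset.disjoint_left.mp (hdisj j i hji) hxj hx).elim
        rw [hμc, if_neg hxj, mul_zero]) (by simp), hμc, if_pos hx]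
    calc ∑ x ∈ O i, Real.sqrt ((∑ j, q j * μc j x) * μ x)
        = ∑ x ∈ O i, Real.sqrt (q i / p i) * μ x := by
          refine Finset.sum_congr rfl (fun x hx => ?_)
          rw [hmix x hx, show q i * (μ x / p i) * μ x = (q i / p i) * μ x ^ 2 by ring,
            Real.sqrt_mul (div_nonneg (hq i).le (hppos i).le), Real.sqrt_sq (hμ0 x)]
      _ = Real.sqrt (q i / p i) * p i := by rw [← Finset.mul_sum, hpμ i]
      _ = Real.sqrt (q i * p i) := (hval_sqrt i).symm
  constructor
  · intro hmin
    have h1 := hmin μc hμc0 hμc1 hμcsupp hμcac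
    simp only [D2] at h1
    have h2 : ∑ i, Real.sqrt (q i * p i) ≤ ∑ x, Real.sqrt ((∑ i, q i * σc i x) * μ x) := by
      rw [← hval]; linarith
    have h3 := (key σc hσ0 hσ1 hσsupp).1
    exact (key σc hσ0 hσ1 hσsupp).2 (le_antisymm h3 h2)
  · intro hEq τ hτ0 hτ1 hτsupp _
    simp only [D2]
    have hσval : ∑ x, Real.sqrt ((∑ i, q i * σc i x) * μ x) = ∑ i, Real.sqrt (q i * p i) := by
      simp only [hEq]; exact hval
    have := (key τ hτ0 hτ1 hτsupp).1
    linarith
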